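/- For each integer d ≥ 0, the function E_d(s) is Lipschitz continuous on (0,∞) with Lipschitz constant 1. -/

import Mathlib

open Finset

/-- `E d s = ∑_{i=0}^{⌊s⌋} ((-1)^i / d!) * C(d,i) * (s - i)^d`. -/
noncomputable def E (d : ℕ) (s : ℝ) : ℝ :=
  ∑ i ∈ Finset.range (⌊s⌋.toNat + 1),
    ((-1 : ℝ) ^ i / d.factorial) * (d.choose i : ℝ) * (s - i) ^ d

/-- The polynomial agreeing with `E d` on `[n, n+1]`. -/
noncomputable def P (d n : ℕ) (s : ℝ) : ℝ :=
  ∑ i ∈ Finset.range (n + 1),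
    ((-1 : ℝ) ^ i / d.factorial) * (d.choose i : ℝ) * (s - i) ^ d

/-- `E d` extended by zero to nonpositive reals. -/
noncomputable def Et (d : ℕ) (s : ℝ) : ℝ := if s ≤ 0 then 0 else E d s

/-- The key induction hypothesis: `Et d` is monotone and 1-Lipschitz. -/
def Good (d : ℕ) : Prop :=
  ∀ a b : ℝ, a ≤ b → 0 ≤ Et d b - Et d a ∧ Et d b - Et d a ≤ b - a

lemma floor_toNat_eq (n : ℕ) (s : ℝ) (h1 : (n : ℝ) ≤ s) (h2 : s < n + 1) :
    ⌊s⌋.toNat = n := by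
  have : ⌊s⌋ = (n : ℤ) := by
    rw [Int.floor_eq_iff]
    constructor <;> push_cast <;> linarith
  simp [this]

lemma E_eq_P (d n : ℕ) (hd : d ≠ 0) (s : ℝ) (h1 : (n : ℝ) ≤ s) (h2 : s ≤ n + 1) :
    E d s = P d n s := by
  rcases lt_or_eq_of_le h2 with h2 | h2
  · rw [E, floor_toNat_eq n s h1 h2]; rfl
  · have hfl : ⌊s⌋.toNat = n + 1 := by
      have : ⌊s⌋ = ((n + 1 : ℕ) : ℤ) := by
        rw [Int.floor_eq_iff]; constructor <;> push_cast <;> linarith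
      simp [this]
    rw [E, hfl, P, Finset.sum_range_succ]
    have : (s - ((n + 1 : ℕ) : ℝ)) ^ d = 0 := by
      push_cast
      rw [h2]
      simp [zero_pow hd]
    simp only [this, mul_zero, add_zero]

lemma E_zero (s : ℝ) (hs : 0 < s) : E 0 s = 1 := by
  rw [E, Finset.sum_eq_single 0]
  · simp
  · intro i _ hi
    have : (0 : ℕ).choose i = 0 := Nat.choose_eq_zero_of_lt (Nat.pos_of_ne_zero hi)
    simp [this]
  · simp

lemma E_zero_val (d : ℕ) (hd : d ≠ 0) : E d 0 = 0 := by
  have h0 : ⌊(0 : ℝ)⌋.toNat = 0 := by norm_num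
  rw [E, h0]
  simp [zero_pow hd]

lemma P_hasDerivAt (d n : ℕ) (s : ℝ) :
    HasDerivAt (P (d + 1) n)
      (∑ i ∈ Finset.range (n + 1),
        ((-1 : ℝ) ^ i / d.factorial) * ((d + 1).choose i : ℝ) * (s - i) ^ d) s := by
  have h : ∀ i ∈ Finset.range (n + 1), HasDerivAt
      (fun s : ℝ => ((-1 : ℝ) ^ i / (d + 1).factorial) * ((d + 1).choose i : ℝ) * (s - i) ^ (d + 1))
      (((-1 : ℝ) ^ i / d.factorial) * ((d + 1).choose i : ℝ) * (s - i) ^ d) s := by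
    intro i _
    have h1 : HasDerivAt (fun s : ℝ => (s - (i : ℝ)) ^ (d + 1))
        ((d + 1 : ℕ) * (s - i) ^ d) s := by
      simpa using ((hasDerivAt_id s).sub_const (i : ℝ)).fun_pow (d + 1)
    have := h1.const_mul (((-1 : ℝ) ^ i / (d + 1).factorial) * ((d + 1).choose i : ℝ))
    refine this.congr_deriv ?_
    have : ((d + 1).factorial : ℝ) = (d + 1) * d.factorial := by
      rw [Nat.factorial_succ]; push_cast; ring
    rw [this]
    have hdf : (d.factorial : ℝ) ≠ 0 := Nat.cast_ne_zero.2 d.factorial_ne_zero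
    field_simp
    push_cast
    ring
  have := HasDerivAt.fun_sum h
  exact this

lemma pascal_sum (d n : ℕ) (s : ℝ) :
    (∑ i ∈ Finset.range (n + 1),
        ((-1 : ℝ) ^ i / d.factorial) * ((d + 1).choose i : ℝ) * (s - i) ^ d)
      = P d n s - ∑ j ∈ Finset.range n,
          ((-1 : ℝ) ^ j / d.factorial) * (d.choose j : ℝ) * ((s - 1) - j) ^ d := by
  rw [Finset.sum_range_succ' _ n, P, Finset.sum_range_succ' _ n]
  have h0 : ((-1 : ℝ) ^ 0 / d.factorial) * ((d + 1).choose 0 : ℝ) * (s - (0 : ℕ)) ^ d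
      = ((-1 : ℝ) ^ 0 / d.factorial) * (d.choose 0 : ℝ) * (s - (0 : ℕ)) ^ d := by simp
  rw [h0]
  have : ∀ j ∈ Finset.range n,
      ((-1 : ℝ) ^ (j + 1) / d.factorial) * ((d + 1).choose (j + 1) : ℝ) * (s - ((j + 1 : ℕ) : ℝ)) ^ d
        = ((-1 : ℝ) ^ (j + 1) / d.factorial) * (d.choose (j + 1) : ℝ) * (s - ((j + 1 : ℕ) : ℝ)) ^ d
          - ((-1 : ℝ) ^ j / d.factorial) * (d.choose j : ℝ) * ((s - 1) - j) ^ d := by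
    intro j _
    rw [Nat.choose_succ_succ]
    have hb : s - ((j + 1 : ℕ) : ℝ) = (s - 1) - j := by push_cast; ring
    rw [hb]
    push_cast
    ring
  rw [Finset.sum_congr rfl this, Finset.sum_sub_distrib]
  ring

lemma deriv_eq_Et (d n : ℕ) (hd : d ≠ 0) (s : ℝ) (h1 : (n : ℝ) < s) (h2 : s < n + 1) :
    (∑ i ∈ Finset.range (n + 1),
        ((-1 : ℝ) ^ i / d.factorial) * ((d + 1).choose i : ℝ) * (s - i) ^ d)
      = Et d s - Et d (s - 1) := by
  rw [pascal_sum]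
  have hn0 : (0 : ℝ) ≤ (n : ℝ) := Nat.cast_nonneg n
  have hs0 : 0 < s := lt_of_le_of_lt hn0 h1
  have hEs : Et d s = P d n s := by
    rw [Et, if_neg (not_le.2 hs0)]
    exact E_eq_P d n hd s h1.le h2.le
  rw [hEs]
  congr 1
  cases n with
  | zero =>
    have : s - 1 ≤ 0 := by push_cast at h2; linarith
    simp [Et, this]
  | succ m =>
    have hm1 : ((m : ℝ)) ≤ s - 1 := by push_cast at h1 ⊢; linarith
    have hm2 : s - 1 ≤ (m : ℝ) + 1 := by push_cast at h2 ⊢; linarith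
    have hpos : 0 < s - 1 := by
      have h0 : (0 : ℝ) ≤ (m : ℝ) := Nat.cast_nonneg m
      push_cast at h1
      linarith
    rw [Et, if_neg (not_le.2 hpos), E_eq_P d m hd (s - 1) hm1 hm2]
    rfl

lemma Et_one (s : ℝ) : Et 1 s = min (max s 0) 1 := by
  rcases le_or_gt s 0 with h | h
  · rw [Et, if_pos h, max_eq_right h]
    norm_num
  · rw [Et, if_neg (not_le.2 h), max_eq_left h.le]
    rcases lt_or_ge s 1 with h1 | h1
    · rw [min_eq_left h1.le, E]
      have h0 : ⌊s⌋.toNat = 0 :=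
        floor_toNat_eq 0 s (by push_cast; linarith) (by push_cast; linarith)
      rw [h0]
      norm_num
    · rw [min_eq_right h1, E]
      have hm : 1 ≤ ⌊s⌋.toNat := by
        have : (1 : ℤ) ≤ ⌊s⌋ := Int.le_floor.2 (by exact_mod_cast h1)
        omega
      have hsub : Finset.range 2 ⊆ Finset.range (⌊s⌋.toNat + 1) :=
        Finset.range_subset_range.2 (by omega)
      rw [← Finset.sum_subset hsub]
      · norm_num [Finset.sum_range_succ]
      · intro i _ hi
        have hi2 : 2 ≤ i := by simp at hi; omega
        have : Nat.choose 1 i = 0 := Nat.choose_eq_zero_of_lt (by omega)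
        simp [this]

lemma good_one : Good 1 := by
  intro a b hab
  rw [Et_one, Et_one]
  constructor <;> (simp only [min_def, max_def]; split_ifs <;> linarith)

lemma piece (d n : ℕ) (hd : d ≠ 0) (h : Good d) (a b : ℝ)
    (ha : (n : ℝ) ≤ a) (hab : a ≤ b) (hb : b ≤ (n : ℝ) + 1) :
    0 ≤ E (d + 1) b - E (d + 1) a ∧ E (d + 1) b - E (d + 1) a ≤ b - a := by
  set q : ℝ → ℝ := fun s => ∑ i ∈ Finset.range (n + 1),
      ((-1 : ℝ) ^ i / d.factorial) * ((d + 1).choose i : ℝ) * (s - i) ^ d with hq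
  have hder : ∀ x : ℝ, HasDerivAt (P (d + 1) n) (q x) x := fun x => P_hasDerivAt d n x
  have hqmem : ∀ x ∈ interior (Set.Icc (n : ℝ) ((n : ℝ) + 1)), 0 ≤ q x ∧ q x ≤ 1 := by
    intro x hx
    rw [interior_Icc, Set.mem_Ioo] at hx
    have hrw : q x = Et d x - Et d (x - 1) := deriv_eq_Et d n hd x hx.1 hx.2
    show 0 ≤ q x ∧ q x ≤ 1
    rw [hrw]
    have := h (x - 1) x (by linarith)
    constructor
    · exact this.1
    · linarith [this.2]
  have hmono1 : MonotoneOn (P (d + 1) n) (Set.Icc (n : ℝ) ((n : ℝ) + 1)) := by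
    apply monotoneOn_of_hasDerivWithinAt_nonneg (convex_Icc _ _)
      (fun x _ => (hder x).continuousAt.continuousWithinAt)
      (fun x _ => (hder x).hasDerivWithinAt)
    intro x hx
    exact (hqmem x hx).1
  have hmono2 : MonotoneOn (fun s => s - P (d + 1) n s) (Set.Icc (n : ℝ) ((n : ℝ) + 1)) := by
    apply monotoneOn_of_hasDerivWithinAt_nonneg (convex_Icc _ _)
      (fun x _ => ((hasDerivAt_id x).sub (hder x)).continuousAt.continuousWithinAt)
      (f' := fun x => 1 - q x)
      (fun x _ => ((hasDerivAt_id x).sub (hder x)).hasDerivWithinAt)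
    intro x hx
    linarith [(hqmem x hx).2]
  have hma : a ∈ Set.Icc (n : ℝ) ((n : ℝ) + 1) := ⟨ha, by linarith⟩
  have hmb : b ∈ Set.Icc (n : ℝ) ((n : ℝ) + 1) := ⟨by linarith, hb⟩
  have e1 : E (d + 1) a = P (d + 1) n a := E_eq_P (d + 1) n (Nat.succ_ne_zero d) a ha (by linarith)
  have e2 : E (d + 1) b = P (d + 1) n b := E_eq_P (d + 1) n (Nat.succ_ne_zero d) b (by linarith) hb
  rw [e1, e2]
  constructor
  · linarith [hmono1 hma hmb hab]
  · have h2 : a - P (d + 1) n a ≤ b - P (d + 1) n b := hmono2 hma hmb hab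
    linarith

lemma E_succ_bounds (d : ℕ) (hd : d ≠ 0) (h : Good d) (n : ℕ) :
    ∀ a b : ℝ, 0 ≤ a → a ≤ b → b ≤ (n : ℝ) →
      0 ≤ E (d + 1) b - E (d + 1) a ∧ E (d + 1) b - E (d + 1) a ≤ b - a := by
  induction n with
  | zero =>
    intro a b h0 hab hb
    push_cast at hb
    have : a = b := le_antisymm hab (by linarith)
    rw [this]
    norm_num
  | succ m ih =>
    intro a b h0 hab hb
    push_cast at hb
    rcases le_or_gt b (m : ℝ) with hbm | hbm
    · exact ih a b h0 hab hbm
    · rcases le_or_gt (m : ℝ) a with ham | ham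
      · exact piece d m hd h a b ham hab (by linarith)
      · have hm0 : (0 : ℝ) ≤ (m : ℝ) := Nat.cast_nonneg m
        have H1 := ih a (m : ℝ) h0 ham.le (le_refl _)
        have H2 := piece d m hd h (m : ℝ) b (le_refl _) hbm.le (by linarith)
        constructor <;> linarith [H1.1, H1.2, H2.1, H2.2]

lemma good_succ (d : ℕ) (hd : d ≠ 0) (h : Good d) : Good (d + 1) := by
  intro a b hab
  have hE0 : E (d + 1) 0 = 0 := E_zero_val (d + 1) (Nat.succ_ne_zero d)
  rcases le_or_gt b 0 with hb | hb
  · have ha0 : a ≤ 0 := hab.trans hb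
    simp only [Et, if_pos hb, if_pos ha0]
    constructor <;> linarith
  · have hceil : b ≤ ((⌈b⌉.toNat : ℕ) : ℝ) := by
      have h2 : (⌈b⌉.toNat : ℤ) = ⌈b⌉ := Int.toNat_of_nonneg (Int.ceil_nonneg hb.le)
      have h3 : ((⌈b⌉.toNat : ℕ) : ℝ) = ((⌈b⌉ : ℤ) : ℝ) := by
        rw [← h2]; exact (Int.cast_natCast _).symm
      rw [h3]
      exact Int.le_ceil b
    rcases le_or_gt a 0 with ha | ha
    · rw [Et, if_neg (not_le.2 hb), Et, if_pos ha]
      have H := E_succ_bounds d hd h ⌈b⌉.toNat 0 b (le_refl 0) hb.le hceil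
      rw [hE0] at H
      constructor <;> linarith [H.1, H.2]
    · rw [Et, if_neg (not_le.2 hb), Et, if_neg (not_le.2 ha)]
      exact E_succ_bounds d hd h ⌈b⌉.toNat a b ha.le hab hceil

lemma good_of_ne_zero (d : ℕ) (hd : d ≠ 0) : Good d := by
  induction d with
  | zero => exact absurd rfl hd
  | succ m ih =>
    rcases Nat.eq_zero_or_pos m with rfl | hm
    · exact good_one
    · exact good_succ m (Nat.pos_iff_ne_zero.mp hm) (ih (Nat.pos_iff_ne_zero.mp hm))

theorem E_lipschitz (d : ℕ) :
    ∀ s s' : ℝ, 0 < s → 0 < s' → |E d s - E d s'| ≤ |s - s'| := by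
  intro s s' hs hs'
  rcases Nat.eq_zero_or_pos d with rfl | hd
  · rw [E_zero s hs, E_zero s' hs']
    simp [abs_nonneg]
  · have hg := good_of_ne_zero d (Nat.pos_iff_ne_zero.mp hd)
    have key : ∀ x y : ℝ, 0 < x → 0 < y → y ≤ x → |E d x - E d y| ≤ |x - y| := by
      intro x y hx hy hyx
      have H := hg y x hyx
      rw [Et, if_neg (not_le.2 hx), Et, if_neg (not_le.2 hy)] at H
      rw [abs_of_nonneg H.1, abs_of_nonneg (by linarith : (0:ℝ) ≤ x - y)]
      exact H.2
    rcases le_total s' s with h | h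
    · exact key s s' hs hs' h
    · have := key s' s hs' hs h
      rw [abs_sub_comm (E d s) (E d s'), abs_sub_comm s s']
      exact this
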